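/- Let X₀ = 0 and let X₁, ..., X_T be independent integrable nonnegative real-valued random variables with means μᵢ = E[Xᵢ], and set μ_{T+1} = 0 and X_{T+1} = 0. Then the quantity OPT = Σ_{i=1}^{T} E[max(Xᵢ - X_{i-1}, 0)] satisfies OPT ≤ 3 · Σ_{i=1}^{T} E[max(μᵢ - X_{i-1}, 0)]. -/

import Mathlib

open MeasureTheory ProbabilityTheory Finset

lemma max_split_aux (a b c : ℝ) : max (a - b) 0 ≤ max (a - c) 0 + max (c - b) 0 := by
  apply max_le
  · have h : a - b = (a - c) + (c - b) := by ring
    rw [h]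
    exact add_le_add (le_max_left _ _) (le_max_left _ _)
  · exact add_nonneg (le_max_right _ _) (le_max_right _ _)

lemma step_ineq_aux {Ω : Type*} [MeasureSpace Ω]
    [IsProbabilityMeasure (ℙ : Measure Ω)]
    (Y Z : Ω → ℝ) (a b : ℝ) (hY : Integrable Y) (hZ : Integrable Z)
    (ha : a = ∫ ω, Y ω) :
    (∫ ω, max (Y ω - Z ω) 0) ≤
      (a - b) + 2 * (∫ ω, max (b - Y ω) 0) + (∫ ω, max (a - Z ω) 0) := by
  have iYZ : Integrable (fun ω => max (Y ω - Z ω) 0) := (hY.sub hZ).pos_part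
  have iYa : Integrable (fun ω => max (Y ω - a) 0) := (hY.sub (integrable_const a)).pos_part
  have iaY : Integrable (fun ω => max (a - Y ω) 0) := ((integrable_const a).sub hY).pos_part
  have ibY : Integrable (fun ω => max (b - Y ω) 0) := ((integrable_const b).sub hY).pos_part
  have iaZ : Integrable (fun ω => max (a - Z ω) 0) := ((integrable_const a).sub hZ).pos_part
  have h1 : (∫ ω, max (Y ω - Z ω) 0) ≤ (∫ ω, max (Y ω - a) 0) + (∫ ω, max (a - Z ω) 0) := by
    rw [← integral_add iYa iaZ]
    exact integral_mono iYZ (iYa.add iaZ) (fun ω => max_split_aux _ _ _)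
  have h2 : (∫ ω, max (Y ω - a) 0) = (∫ ω, max (a - Y ω) 0) := by
    have hpt : ∀ ω, max (Y ω - a) 0 = max (a - Y ω) 0 + (Y ω - a) := by
      intro ω
      rcases le_total (Y ω) a with h | h
      · rw [max_eq_right (by linarith), max_eq_left (by linarith)]; ring
      · rw [max_eq_left (by linarith), max_eq_right (by linarith)]; ring
    calc (∫ ω, max (Y ω - a) 0) = ∫ ω, (max (a - Y ω) 0 + (Y ω - a)) := by simp_rw [hpt]
      _ = (∫ ω, max (a - Y ω) 0) + ((∫ ω, Y ω) - a) := by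
          have iYa' : Integrable (fun ω => Y ω - a) := hY.sub (integrable_const a)
          rw [integral_add iaY iYa', integral_sub hY (integrable_const a)]
          simp
      _ = ∫ ω, max (a - Y ω) 0 := by rw [← ha]; ring
  have h3 : (∫ ω, max (a - Y ω) 0) ≤ (∫ ω, max (b - Y ω) 0) + max (a - b) 0 := by
    have hpt : ∀ ω, max (a - Y ω) 0 ≤ max (b - Y ω) 0 + max (a - b) 0 := by
      intro ω
      have := max_split_aux a (Y ω) b
      linarith
    calc (∫ ω, max (a - Y ω) 0) ≤ ∫ ω, (max (b - Y ω) 0 + max (a - b) 0) :=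
          integral_mono iaY (ibY.add (integrable_const _)) hpt
      _ = (∫ ω, max (b - Y ω) 0) + max (a - b) 0 := by
          rw [integral_add ibY (integrable_const _)]
          simp
  have h4 : (∫ ω, (b - Y ω)) ≤ ∫ ω, max (b - Y ω) 0 :=
    integral_mono ((integrable_const b).sub hY) ibY (fun ω => le_max_left _ _)
  have h5 : (∫ ω, (b - Y ω)) = b - a := by
    rw [integral_sub (integrable_const b) hY]
    simp [ha]
  have hnn : 0 ≤ ∫ ω, max (b - Y ω) 0 := integral_nonneg (fun ω => le_max_right _ _)
  have h6 : max (a - b) 0 ≤ (a - b) + ∫ ω, max (b - Y ω) 0 := by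
    apply max_le
    · linarith
    · linarith
  linarith

lemma sum_bound_aux (T : ℕ) (A B : ℕ → ℝ) (μ : ℕ → ℝ)
    (hkey : ∀ i, B i ≤ (μ i - μ (i + 1)) + 2 * A (i + 1) + A i)
    (hAnn : ∀ i, 0 ≤ A i)
    (hAT : A (T + 1) = 0) (hμT : μ (T + 1) = 0) (hμ1 : μ 1 ≤ A 1) :
    ∑ i ∈ Icc 1 T, B i ≤ 3 * ∑ i ∈ Icc 1 T, A i := by
  have hB : ∑ i ∈ Icc 1 T, B i ≤
      ∑ i ∈ Icc 1 T, ((μ i - μ (i + 1)) + 2 * A (i + 1) + A i) :=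
    Finset.sum_le_sum (fun i _ => hkey i)
  have hconv : ∀ f : ℕ → ℝ, ∑ i ∈ Icc 1 T, f i = ∑ i ∈ range T, f (1 + i) := by
    intro f
    rw [← Finset.Ico_add_one_right_eq_Icc, Finset.sum_Ico_eq_sum_range]
    norm_num
  rw [hconv, hconv] at hB
  rw [hconv, hconv]
  have hsplit : ∑ i ∈ range T, ((μ (1 + i) - μ (1 + i + 1)) + 2 * A (1 + i + 1) + A (1 + i)) =
      (∑ i ∈ range T, (μ (1 + i) - μ (1 + i + 1))) +
        2 * (∑ i ∈ range T, A (1 + i + 1)) + ∑ i ∈ range T, A (1 + i) := by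
    rw [Finset.sum_add_distrib, Finset.sum_add_distrib, Finset.mul_sum]
  have htel : ∑ i ∈ range T, (μ (1 + i) - μ (1 + i + 1)) = μ 1 - μ (T + 1) := by
    have := Finset.sum_range_sub' (fun i => μ (1 + i)) T
    simpa [add_comm, add_assoc, add_left_comm] using this
  have hshift : ∑ i ∈ range T, A (1 + i + 1) =
      (∑ i ∈ range T, A (1 + i)) + A (T + 1) - A 1 := by
    have h1 := Finset.sum_range_succ' (fun i => A (1 + i)) T
    have h2 := Finset.sum_range_succ (fun i => A (1 + i)) T
    simp only [add_comm, add_assoc, add_left_comm] at h1 h2 ⊢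
    linarith
  have hA1 : 0 ≤ A 1 := hAnn 1
  calc ∑ i ∈ range T, B (1 + i) ≤ _ := hB
    _ = (μ 1 - μ (T + 1)) + 2 * ((∑ i ∈ range T, A (1 + i)) + A (T + 1) - A 1) +
        ∑ i ∈ range T, A (1 + i) := by rw [hsplit, htel, hshift]
    _ ≤ 3 * ∑ i ∈ range T, A (1 + i) := by
        rw [hAT, hμT]
        linarith

theorem opt_le_three_alg {Ω : Type*} [MeasureSpace Ω]
    [IsProbabilityMeasure (ℙ : Measure Ω)]
    (T : ℕ) (X : ℕ → Ω → ℝ) (μ : ℕ → ℝ)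
    (hX0 : ∀ ω, X 0 ω = 0) (hXT1 : ∀ ω, X (T + 1) ω = 0)
    (hmeas : ∀ i, Measurable (X i))
    (hint : ∀ i, Integrable (X i))
    (hnonneg : ∀ i ω, 0 ≤ X i ω)
    (hindep : ProbabilityTheory.iIndepFun X ℙ)
    (hμ : ∀ i, μ i = ∫ ω, X i ω) :
    ∑ i ∈ Icc 1 T, ∫ ω, max (X i ω - X (i - 1) ω) 0 ≤
      3 * ∑ i ∈ Icc 1 T, ∫ ω, max (μ i - X (i - 1) ω) 0 := by
  have hμT : μ (T + 1) = 0 := by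
    rw [hμ]
    simp [hXT1]
  apply sum_bound_aux T (fun i => ∫ ω, max (μ i - X (i - 1) ω) 0)
      (fun i => ∫ ω, max (X i ω - X (i - 1) ω) 0) μ
  · intro i
    have := step_ineq_aux (X i) (X (i - 1)) (μ i) (μ (i + 1)) (hint i) (hint (i - 1)) (hμ i)
    simpa using this
  · intro i
    exact integral_nonneg (fun ω => le_max_right _ _)
  · have hpt : ∀ ω : Ω, max (μ (T + 1) - X (T + 1 - 1) ω) 0 = 0 := by
      intro ω
      simp only [Nat.add_sub_cancel, hμT]
      have := hnonneg T ω
      apply max_eq_right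
      linarith
    simp only [hpt]
    exact integral_zero _ _
  · exact hμT
  · have hpt : ∀ ω : Ω, max (μ 1 - X (1 - 1) ω) 0 = max (μ 1) 0 := by
      intro ω
      simp [hX0]
    simp only [hpt]
    rw [integral_const]
    simp [le_max_left]
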